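/- In intuitionistic logic, for every variable-free formula E, a formula A is E-projective if and only if A is E-extendable (i.e. ⊢ A → E and every finite rooted Kripke model weakly forcing A and forcing E has a par-variant forcing A). -/

import Mathlib

inductive Form (var par : Type) : Type where
  | bot : Form var par
  | v : var → Form var par
  | p : par → Form var par
  | and : Form var par → Form var par → Form var par
  | or : Form var par → Form var par → Form var par
  | imp : Form var par → Form var par → Form var par

namespace Form
variable {var par : Type}

def neg (A : Form var par) : Form var par := A.imp .bot
def top : Form var par := Form.neg .bot
def fiff (A B : Form var par) : Form var par := (A.imp B).and (B.imp A)

/-- `varFree A`: `A` contains no variables (it lies in the parameter-only sublanguage). -/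
def varFree : Form var par → Prop
  | .bot => True
  | .v _ => False
  | .p _ => True
  | .and A B => varFree A ∧ varFree B
  | .or A B => varFree A ∧ varFree B
  | .imp A B => varFree A ∧ varFree B

/-- Substitutions act on variables, fix parameters, and commute with connectives. -/
def subst (θ : var → Form var par) : Form var par → Form var par
  | .bot => .bot
  | .v x => θ x
  | .p q => .p q
  | .and A B => (subst θ A).and (subst θ B)
  | .or A B => (subst θ A).or (subst θ B)
  | .imp A B => (subst θ A).imp (subst θ B)

end Form

/-- Hilbert-style provability: `cl = false` is intuitionistic logic (IPC),
`cl = true` is classical logic (CPC). -/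
inductive Prv {var par : Type} (cl : Bool) : Form var par → Prop where
  | mp {A B : Form var par} : Prv cl (A.imp B) → Prv cl A → Prv cl B
  | k {A B : Form var par} : Prv cl (A.imp (B.imp A))
  | s {A B C : Form var par} :
      Prv cl ((A.imp (B.imp C)).imp ((A.imp B).imp (A.imp C)))
  | andI {A B : Form var par} : Prv cl (A.imp (B.imp (A.and B)))
  | andE1 {A B : Form var par} : Prv cl ((A.and B).imp A)
  | andE2 {A B : Form var par} : Prv cl ((A.and B).imp B)
  | orI1 {A B : Form var par} : Prv cl (A.imp (A.or B))
  | orI2 {A B : Form var par} : Prv cl (B.imp (A.or B))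
  | orE {A B C : Form var par} :
      Prv cl ((A.imp C).imp ((B.imp C).imp ((A.or B).imp C)))
  | exf {A : Form var par} : Prv cl (Form.bot.imp A)
  | dne {A : Form var par} : cl = true → Prv cl (A.neg.neg.imp A)

/-- `U` is the uniform post-interpolant of `A` with respect to the parameters. -/
def IsUPI {var par : Type} (cl : Bool) (A U : Form var par) : Prop :=
  U.varFree ∧ Prv cl (A.imp U) ∧
    ∀ C : Form var par, C.varFree → Prv cl (A.imp C) → Prv cl (U.imp C)

/-- A finite rooted intuitionistic Kripke frame. -/
structure Frame where
  W : Type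
  fin : Fintype W
  le : W → W → Prop
  refl : ∀ w, le w w
  trans : ∀ a b c, le a b → le b c → le a c
  root : W
  root_le : ∀ w, le root w

/-- A persistent valuation on a frame. -/
structure Val (var par : Type) (F : Frame) where
  val : F.W → var ⊕ par → Prop
  mono : ∀ {w u : F.W} {a : var ⊕ par}, F.le w u → val w a → val u a

/-- Kripke forcing. -/
def force {var par : Type} (F : Frame) (V : Val var par F) : F.W → Form var par → Prop
  | _, .bot => False
  | w, .v x => V.val w (Sum.inl x)
  | w, .p q => V.val w (Sum.inr q)
  | w, .and A B => force F V w A ∧ force F V w B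
  | w, .or A B => force F V w A ∨ force F V w B
  | w, .imp A B => ∀ u, F.le w u → force F V u A → force F V u B

/-- `V'` is a par-variant of `V`: same valuation off the root, and the same
valuation of parameters at the root (only variables may change at the root). -/
def ParVariant {var par : Type} (F : Frame) (V V' : Val var par F) : Prop :=
  (∀ w : F.W, w ≠ F.root → ∀ a : var ⊕ par, V.val w a ↔ V'.val w a) ∧
  (∀ q : par, V.val F.root (Sum.inr q) ↔ V'.val F.root (Sum.inr q))

/-- `A` is `E`-projective. -/
def EProjective {var par : Type} (A E : Form var par) : Prop :=
  ∃ θ : var → Form var par,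
    (∀ x : var, Prv false (A.imp ((θ x).fiff (Form.v x)))) ∧
    Prv false ((Form.subst θ A).fiff E)

/-- `A` is `E`-extendable. -/
def EExtendable {var par : Type} (A E : Form var par) : Prop :=
  Prv false (A.imp E) ∧
    ∀ (F : Frame) (V : Val var par F),
      (∀ w : F.W, w ≠ F.root → force F V w A) →
      (∀ w : F.W, force F V w E) →
      ∃ V' : Val var par F, ParVariant F V V' ∧ ∀ w : F.W, force F V' w A

noncomputable section
namespace GP
open Form
variable {var par : Type}

/-- occurrence of an atom in a formula -/
def occ : Form var par → (var ⊕ par) → Prop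
  | .bot, _ => False
  | .v x, a => a = Sum.inl x
  | .p q, a => a = Sum.inr q
  | .and A B, a => occ A a ∨ occ B a
  | .or A B, a => occ A a ∨ occ B a
  | .imp A B, a => occ A a ∨ occ B a

theorem occ_not_var {B : Form var par} (h : B.varFree) {x : var} :
    ¬ occ B (Sum.inl x) := by
  induction B with
  | bot => simp [occ]
  | v y => exact (h).elim
  | p q => simp [occ]
  | and C D ih1 ih2 => rintro (h1|h2); exacts [ih1 h.1 h1, ih2 h.2 h2]
  | or C D ih1 ih2 => rintro (h1|h2); exacts [ih1 h.1 h1, ih2 h.2 h2]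
  | imp C D ih1 ih2 => rintro (h1|h2); exacts [ih1 h.1 h1, ih2 h.2 h2]

def fvars : Form var par → List var
  | .bot => []
  | .v x => [x]
  | .p _ => []
  | .and A B => fvars A ++ fvars B
  | .or A B => fvars A ++ fvars B
  | .imp A B => fvars A ++ fvars B

theorem mem_fvars_of_occ {B : Form var par} {x : var} (h : occ B (Sum.inl x)) :
    x ∈ fvars B := by
  induction B with
  | bot => cases h
  | v y => simp [occ] at h; simp [fvars, h.symm]  -- h : Sum.inl x = Sum.inl y?
  | p q => simp [occ] at h
  | and C D ih1 ih2 => rcases h with h|h <;> simp [fvars, ih1, ih2, *]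
  | or C D ih1 ih2 => rcases h with h|h <;> simp [fvars, ih1, ih2, *]
  | imp C D ih1 ih2 => rcases h with h|h <;> simp [fvars, ih1, ih2, *]

@[simp] theorem subst_id (B : Form var par) : subst (fun x => .v x) B = B := by
  induction B <;> simp [subst, *]

theorem subst_subst (σ τ : var → Form var par) (B : Form var par) :
    subst σ (subst τ B) = subst (fun x => subst σ (τ x)) B := by
  induction B <;> simp [subst, *]

theorem subst_varFree {B : Form var par} (h : B.varFree) (σ : var → Form var par) :
    subst σ B = B := by
  induction B with
  | bot => rfl
  | v x => exact h.elim
  | p q => rfl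
  | and C D ih1 ih2 => simp [subst, ih1 h.1, ih2 h.2]
  | or C D ih1 ih2 => simp [subst, ih1 h.1, ih2 h.2]
  | imp C D ih1 ih2 => simp [subst, ih1 h.1, ih2 h.2]

theorem prv_subst {cl : Bool} {B : Form var par} (σ : var → Form var par)
    (h : Prv cl B) : Prv cl (subst σ B) := by
  induction h with
  | mp h1 h2 ih1 ih2 => exact Prv.mp ih1 ih2
  | k => exact Prv.k
  | s => exact Prv.s
  | andI => exact Prv.andI
  | andE1 => exact Prv.andE1
  | andE2 => exact Prv.andE2
  | orI1 => exact Prv.orI1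
  | orI2 => exact Prv.orI2
  | orE => exact Prv.orE
  | exf => exact Prv.exf
  | dne hcl => exact Prv.dne hcl

theorem force_mono {F : Frame} {V : Val var par F} {w u : F.W} (h : F.le w u) :
    ∀ {B : Form var par}, force F V w B → force F V u B := by
  intro B
  induction B generalizing w u with
  | bot => exact id
  | v x => exact fun hv => V.mono h hv
  | p q => exact fun hv => V.mono h hv
  | and C D ih1 ih2 => exact fun hf => ⟨ih1 h hf.1, ih2 h hf.2⟩
  | or C D ih1 ih2 => exact fun hf => hf.elim (fun a => Or.inl (ih1 h a)) (fun a => Or.inr (ih2 h a))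
  | imp C D ih1 ih2 => exact fun hf v hv => hf v (F.trans _ _ _ h hv)

theorem force_cluster {F : Frame} {V : Val var par F} {w u : F.W}
    (h1 : F.le w u) (h2 : F.le u w) {B : Form var par} :
    force F V w B ↔ force F V u B :=
  ⟨force_mono h1, force_mono h2⟩

/-- Forcing only depends on the valuation of occurring atoms in the cone. -/
theorem force_ext {F : Frame} {V V' : Val var par F} {B : Form var par} :
    ∀ {w : F.W}, (∀ u, F.le w u → ∀ a, occ B a → (V.val u a ↔ V'.val u a)) →
    (force F V w B ↔ force F V' w B) := by
  induction B with
  | bot => simp [force]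
  | v x => intro w h; exact h w (F.refl w) _ rfl
  | p q => intro w h; exact h w (F.refl w) _ rfl
  | and C D ih1 ih2 =>
      intro w h
      exact and_congr (ih1 fun u hu a ha => h u hu a (Or.inl ha))
        (ih2 fun u hu a ha => h u hu a (Or.inr ha))
  | or C D ih1 ih2 =>
      intro w h
      exact or_congr (ih1 fun u hu a ha => h u hu a (Or.inl ha))
        (ih2 fun u hu a ha => h u hu a (Or.inr ha))
  | imp C D ih1 ih2 =>
      intro w h
      refine forall_congr' fun u => forall_congr' fun hu => imp_congr ?_ ?_
      · exact ih1 fun v hv a ha => h v (F.trans _ _ _ hu hv) a (Or.inl ha)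
      · exact ih2 fun v hv a ha => h v (F.trans _ _ _ hu hv) a (Or.inr ha)

/-- composition of a valuation with a substitution -/
def vcomp {F : Frame} (V : Val var par F) (σ : var → Form var par) : Val var par F where
  val w a := match a with
    | Sum.inl x => force F V w (σ x)
    | Sum.inr q => V.val w (Sum.inr q)
  mono := by
    intro w u a h hv
    cases a with
    | inl x => exact force_mono h hv
    | inr q => exact V.mono h hv

theorem force_vcomp {F : Frame} {V : Val var par F} {σ : var → Form var par}
    {B : Form var par} : ∀ {w : F.W}, force F (vcomp V σ) w B ↔ force F V w (subst σ B) := by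
  induction B with
  | bot => simp [force, subst]
  | v x => intro w; rfl
  | p q => intro w; rfl
  | and C D ih1 ih2 => intro w; exact and_congr ih1 ih2
  | or C D ih1 ih2 => intro w; exact or_congr ih1 ih2
  | imp C D ih1 ih2 =>
      intro w
      exact forall_congr' fun u => forall_congr' fun hu => imp_congr ih1 ih2

/-- subframe on a subset -/
def subframe (F : Frame) (S : Set F.W) (w0 : F.W) (hw0 : w0 ∈ S)
    (hup : ∀ u ∈ S, F.le w0 u) : Frame where
  W := {u : F.W // u ∈ S}
  fin := by haveI := F.fin; exact Fintype.ofFinite _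
  le u v := F.le u.1 v.1
  refl u := F.refl u.1
  trans a b c h1 h2 := F.trans _ _ _ h1 h2
  root := ⟨w0, hw0⟩
  root_le u := hup u.1 u.2

def subval {F : Frame} (V : Val var par F) (S : Set F.W) (w0 : F.W) (hw0 : w0 ∈ S)
    (hup : ∀ u ∈ S, F.le w0 u) : Val var par (subframe F S w0 hw0 hup) where
  val u a := V.val u.1 a
  mono h hv := V.mono h hv

theorem force_sub {F : Frame} {V : Val var par F} {S : Set F.W} {w0 : F.W}
    {hw0 : w0 ∈ S} {hup : ∀ u ∈ S, F.le w0 u}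
    (hdense : ∀ u ∈ S, ∀ v, F.le u v → ∃ v' ∈ S, F.le v v' ∧ F.le v' v)
    {B : Form var par} :
    ∀ (u : (subframe F S w0 hw0 hup).W),
      force (subframe F S w0 hw0 hup) (subval V S w0 hw0 hup) u B ↔ force F V u.1 B := by
  induction B with
  | bot => intro u; simp [force]
  | v x => intro u; rfl
  | p q => intro u; rfl
  | and C D ih1 ih2 => intro u; exact and_congr (ih1 u) (ih2 u)
  | or C D ih1 ih2 => intro u; exact or_congr (ih1 u) (ih2 u)
  | imp C D ih1 ih2 =>
      intro u
      constructor
      · intro hf v hv hC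
        obtain ⟨v', hv'S, hvv', hv'v⟩ := hdense u.1 u.2 v hv
        have : force F V v' C := force_mono hvv' hC
        have hD := hf ⟨v', hv'S⟩ (F.trans _ _ _ hv hvv') ((ih1 _).2 this)
        exact force_mono hv'v ((ih2 _).1 hD)
      · intro hf v hv hC
        exact (ih2 _).2 (hf v.1 hv ((ih1 _).1 hC))

end GP
namespace GP
open Form
variable {var par : Type}

def ctximp : List (Form var par) → Form var par → Form var par
  | [], C => C
  | A :: Γ, C => A.imp (ctximp Γ C)

/-- Natural deduction for IPC. -/
inductive Nd : List (Form var par) → Form var par → Prop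
  | ax {Γ : List (Form var par)} {A : Form var par} : A ∈ Γ → Nd Γ A
  | impI {Γ : List (Form var par)} {A B : Form var par} : Nd (A :: Γ) B → Nd Γ (A.imp B)
  | impE {Γ : List (Form var par)} {A B : Form var par} : Nd Γ (A.imp B) → Nd Γ A → Nd Γ B
  | andI {Γ : List (Form var par)} {A B : Form var par} : Nd Γ A → Nd Γ B → Nd Γ (A.and B)
  | andE1 {Γ : List (Form var par)} {A B : Form var par} : Nd Γ (A.and B) → Nd Γ A
  | andE2 {Γ : List (Form var par)} {A B : Form var par} : Nd Γ (A.and B) → Nd Γ B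
  | orI1 {Γ : List (Form var par)} {A B : Form var par} : Nd Γ A → Nd Γ (A.or B)
  | orI2 {Γ : List (Form var par)} {A B : Form var par} : Nd Γ B → Nd Γ (A.or B)
  | orE {Γ : List (Form var par)} {A B C : Form var par} : Nd Γ (A.or B) → Nd (A :: Γ) C → Nd (B :: Γ) C → Nd Γ C
  | botE {Γ : List (Form var par)} {A : Form var par} : Nd Γ Form.bot → Nd Γ A

theorem Nd.wk {Γ Γ' : List (Form var par)} {A : Form var par}
    (h : Nd Γ A) (hs : ∀ x ∈ Γ, x ∈ Γ') : Nd Γ' A := by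
  have cons_sub : ∀ (C : Form var par) (Δ Δ' : List (Form var par)),
      (∀ x ∈ Δ, x ∈ Δ') → ∀ x ∈ C :: Δ, x ∈ C :: Δ' := by
    intro C Δ Δ' h x hx
    rcases List.mem_cons.1 hx with h'|h'
    · exact h' ▸ List.mem_cons_self
    · exact List.mem_cons_of_mem _ (h _ h')
  induction h generalizing Γ' with
  | ax h => exact Nd.ax (hs _ h)
  | impI h ih => exact Nd.impI (ih (cons_sub _ _ _ hs))
  | impE h1 h2 ih1 ih2 => exact Nd.impE (ih1 hs) (ih2 hs)
  | andI h1 h2 ih1 ih2 => exact Nd.andI (ih1 hs) (ih2 hs)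
  | andE1 h ih => exact Nd.andE1 (ih hs)
  | andE2 h ih => exact Nd.andE2 (ih hs)
  | orI1 h ih => exact Nd.orI1 (ih hs)
  | orI2 h ih => exact Nd.orI2 (ih hs)
  | orE h h1 h2 ih ih1 ih2 =>
      exact Nd.orE (ih hs) (ih1 (cons_sub _ _ _ hs)) (ih2 (cons_sub _ _ _ hs))
  | botE h ih => exact Nd.botE (ih hs)

theorem nd_of_prv {Γ : List (Form var par)} {A : Form var par}
    (h : Prv false A) : Nd Γ A := by
  induction h with
  | mp h1 h2 ih1 ih2 => exact Nd.impE ih1 ih2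
  | k => exact Nd.impI (Nd.impI (Nd.ax (by simp)))
  | s =>
      rename_i A B C
      refine Nd.impI (Nd.impI (Nd.impI ?_))
      have ha : Nd (A :: (A.imp B) :: (A.imp (B.imp C)) :: Γ) A := Nd.ax (by simp)
      have hf : Nd (A :: (A.imp B) :: (A.imp (B.imp C)) :: Γ) (A.imp (B.imp C)) := Nd.ax (by simp)
      have hg : Nd (A :: (A.imp B) :: (A.imp (B.imp C)) :: Γ) (A.imp B) := Nd.ax (by simp)
      exact Nd.impE (Nd.impE hf ha) (Nd.impE hg ha)
  | andI =>
      rename_i A B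
      refine Nd.impI (Nd.impI ?_)
      have ha : Nd (B :: A :: Γ) A := Nd.ax (by simp)
      have hb : Nd (B :: A :: Γ) B := Nd.ax (by simp)
      exact Nd.andI ha hb
  | andE1 =>
      rename_i A B
      exact Nd.impI (Nd.andE1 (Nd.ax (show A.and B ∈ _ by simp)))
  | andE2 =>
      rename_i A B
      exact Nd.impI (Nd.andE2 (Nd.ax (show A.and B ∈ _ by simp)))
  | orI1 => exact Nd.impI (Nd.orI1 (Nd.ax (by simp)))
  | orI2 => exact Nd.impI (Nd.orI2 (Nd.ax (by simp)))
  | orE =>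
      rename_i A B C
      refine Nd.impI (Nd.impI (Nd.impI ?_))
      have hab : Nd ((A.or B) :: (B.imp C) :: (A.imp C) :: Γ) (A.or B) := Nd.ax (by simp)
      have h1 : Nd (A :: (A.or B) :: (B.imp C) :: (A.imp C) :: Γ) C :=
        Nd.impE (Nd.ax (show A.imp C ∈ _ by simp)) (Nd.ax (by simp))
      have h2 : Nd (B :: (A.or B) :: (B.imp C) :: (A.imp C) :: Γ) C :=
        Nd.impE (Nd.ax (show B.imp C ∈ _ by simp)) (Nd.ax (by simp))
      exact Nd.orE hab h1 h2
  | exf => exact Nd.impI (Nd.botE (Nd.ax (by simp)))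
  | dne hcl => simp at hcl

/- Hilbert toolkit -/
theorem imp_refl (A : Form var par) : Prv false (A.imp A) :=
  Prv.mp (Prv.mp (Prv.s (B := A.imp A) (C := A)) Prv.k) Prv.k

theorem mp_under {X P Q : Form var par} (h : Prv false (X.imp (P.imp Q)))
    (hp : Prv false P) : Prv false (X.imp Q) :=
  Prv.mp (Prv.mp Prv.s h) (Prv.mp Prv.k hp)

theorem imp_trans {A B C : Form var par} (h1 : Prv false (A.imp B))
    (h2 : Prv false (B.imp C)) : Prv false (A.imp C) :=
  Prv.mp (Prv.mp Prv.s (Prv.mp Prv.k h2)) h1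

theorem comp_int (A B C : Form var par) :
    Prv false ((B.imp C).imp ((A.imp B).imp (A.imp C))) :=
  imp_trans Prv.k Prv.s

theorem flip_int (A B C : Form var par) :
    Prv false ((A.imp (B.imp C)).imp (B.imp (A.imp C))) :=
  mp_under (imp_trans Prv.s (comp_int B (A.imp B) (A.imp C))) Prv.k

theorem ctx_mp_int (Γ : List (Form var par)) (C D : Form var par) :
    Prv false ((ctximp Γ (C.imp D)).imp ((ctximp Γ C).imp (ctximp Γ D))) := by
  induction Γ with
  | nil => exact imp_refl _
  | cons A Γ ih =>
      exact imp_trans (Prv.mp (comp_int A _ _) ih) Prv.s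

theorem prvl_mp {Γ : List (Form var par)} {C D : Form var par}
    (h1 : Prv false (ctximp Γ (C.imp D))) (h2 : Prv false (ctximp Γ C)) :
    Prv false (ctximp Γ D) :=
  Prv.mp (Prv.mp (ctx_mp_int Γ C D) h1) h2

theorem prvl_of {Γ : List (Form var par)} {C : Form var par} (h : Prv false C) :
    Prv false (ctximp Γ C) := by
  induction Γ with
  | nil => exact h
  | cons A Γ ih => exact Prv.mp Prv.k ih

theorem head_imp (Γ : List (Form var par)) (C : Form var par) :
    Prv false (C.imp (ctximp Γ C)) := by
  induction Γ with
  | nil => exact imp_refl _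
  | cons A Γ ih => exact imp_trans ih Prv.k

theorem prvl_ax {Γ : List (Form var par)} {C : Form var par} (h : C ∈ Γ) :
    Prv false (ctximp Γ C) := by
  induction Γ with
  | nil => cases h
  | cons A Γ ih =>
      rcases List.mem_cons.1 h with h'|h'
      · exact h' ▸ head_imp Γ A
      · exact Prv.mp Prv.k (ih h')

theorem rot_int (Γ : List (Form var par)) (A B : Form var par) :
    Prv false ((A.imp (ctximp Γ B)).imp (ctximp Γ (A.imp B))) := by
  induction Γ with
  | nil => exact imp_refl _
  | cons C Γ ih =>
      exact imp_trans (flip_int A C (ctximp Γ B)) (Prv.mp (comp_int C _ _) ih)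

theorem prv_of_nd {Γ : List (Form var par)} {C : Form var par} (h : Nd Γ C) :
    Prv false (ctximp Γ C) := by
  induction h with
  | ax h => exact prvl_ax h
  | impI h ih => exact Prv.mp (rot_int _ _ _) ih
  | impE h1 h2 ih1 ih2 => exact prvl_mp ih1 ih2
  | andI h1 h2 ih1 ih2 => exact prvl_mp (prvl_mp (prvl_of Prv.andI) ih1) ih2
  | andE1 h ih => exact prvl_mp (prvl_of Prv.andE1) ih
  | andE2 h ih => exact prvl_mp (prvl_of Prv.andE2) ih
  | orI1 h ih => exact prvl_mp (prvl_of Prv.orI1) ih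
  | orI2 h ih => exact prvl_mp (prvl_of Prv.orI2) ih
  | orE h h1 h2 ih ih1 ih2 =>
      exact prvl_mp (prvl_mp (prvl_mp (prvl_of Prv.orE)
        (Prv.mp (rot_int _ _ _) ih1)) (Prv.mp (rot_int _ _ _) ih2)) ih
  | botE h ih => exact prvl_mp (prvl_of Prv.exf) ih

theorem prv_iff_nd {A : Form var par} : Prv false A ↔ Nd [] A :=
  ⟨nd_of_prv, fun h => prv_of_nd h⟩

end GP
namespace GP
open Form
variable {var par : Type}

theorem sound {A : Form var par} (h : Prv false A) :
    ∀ (F : Frame) (V : Val var par F) (w : F.W), force F V w A := by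
  induction h with
  | mp h1 h2 ih1 ih2 =>
      intro F V w
      exact ih1 F V w w (F.refl w) (ih2 F V w)
  | k =>
      intro F V w u _ hA v huv _
      exact force_mono huv hA
  | s =>
      intro F V w u _ h1 v huv h2 t hvt ha
      exact h1 t (F.trans _ _ _ huv hvt) ha t (F.refl t) (h2 t hvt ha)
  | andI =>
      intro F V w u _ hA v huv hB
      exact ⟨force_mono huv hA, hB⟩
  | andE1 => intro F V w u _ h; exact h.1
  | andE2 => intro F V w u _ h; exact h.2
  | orI1 => intro F V w u _ h; exact Or.inl h
  | orI2 => intro F V w u _ h; exact Or.inr h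
  | orE =>
      intro F V w u _ h1 v huv h2 t hvt h3
      rcases h3 with h|h
      · exact h1 t (F.trans _ _ _ huv hvt) h
      · exact h2 t hvt h
  | exf => intro F V w u _ h; exact h.elim
  | dne hcl => simp at hcl

end GP
namespace GP
open Form
variable {var par : Type}

theorem Nd.wkc {Γ : List (Form var par)} {A B : Form var par} (h : Nd Γ A) :
    Nd (B :: Γ) A := h.wk (fun x hx => List.mem_cons_of_mem _ hx)

theorem nd_fiff_refl {Γ : List (Form var par)} (A : Form var par) :
    Nd Γ (A.fiff A) :=
  Nd.andI (Nd.impI (Nd.ax (by simp))) (Nd.impI (Nd.ax (by simp)))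

theorem nd_fiff_trans {Γ : List (Form var par)} {A B C : Form var par}
    (h1 : Nd Γ (A.fiff B)) (h2 : Nd Γ (B.fiff C)) : Nd Γ (A.fiff C) := by
  refine Nd.andI (Nd.impI ?_) (Nd.impI ?_)
  · exact Nd.impE (Nd.andE1 h2.wkc) (Nd.impE (Nd.andE1 h1.wkc) (Nd.ax (by simp)))
  · exact Nd.impE (Nd.andE2 h1.wkc) (Nd.impE (Nd.andE2 h2.wkc) (Nd.ax (by simp)))

theorem nd_fiff_and {Γ : List (Form var par)} {C C' D D' : Form var par}
    (h1 : Nd Γ (C.fiff C')) (h2 : Nd Γ (D.fiff D')) :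
    Nd Γ ((C.and D).fiff (C'.and D')) := by
  refine Nd.andI (Nd.impI (Nd.andI ?_ ?_)) (Nd.impI (Nd.andI ?_ ?_))
  · exact Nd.impE (Nd.andE1 h1.wkc) (Nd.andE1 (Nd.ax (show C.and D ∈ _ by simp)))
  · exact Nd.impE (Nd.andE1 h2.wkc) (Nd.andE2 (Nd.ax (show C.and D ∈ _ by simp)))
  · exact Nd.impE (Nd.andE2 h1.wkc) (Nd.andE1 (Nd.ax (show C'.and D' ∈ _ by simp)))
  · exact Nd.impE (Nd.andE2 h2.wkc) (Nd.andE2 (Nd.ax (show C'.and D' ∈ _ by simp)))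

theorem nd_fiff_or {Γ : List (Form var par)} {C C' D D' : Form var par}
    (h1 : Nd Γ (C.fiff C')) (h2 : Nd Γ (D.fiff D')) :
    Nd Γ ((C.or D).fiff (C'.or D')) := by
  refine Nd.andI (Nd.impI ?_) (Nd.impI ?_)
  · refine Nd.orE (Nd.ax (List.mem_cons_self)) ?_ ?_
    · exact Nd.orI1 (Nd.impE (Nd.andE1 h1.wkc.wkc) (Nd.ax (by simp)))
    · exact Nd.orI2 (Nd.impE (Nd.andE1 h2.wkc.wkc) (Nd.ax (by simp)))
  · refine Nd.orE (Nd.ax (List.mem_cons_self)) ?_ ?_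
    · exact Nd.orI1 (Nd.impE (Nd.andE2 h1.wkc.wkc) (Nd.ax (by simp)))
    · exact Nd.orI2 (Nd.impE (Nd.andE2 h2.wkc.wkc) (Nd.ax (by simp)))

theorem nd_fiff_imp {Γ : List (Form var par)} {C C' D D' : Form var par}
    (h1 : Nd Γ (C.fiff C')) (h2 : Nd Γ (D.fiff D')) :
    Nd Γ ((C.imp D).fiff (C'.imp D')) := by
  refine Nd.andI (Nd.impI (Nd.impI ?_)) (Nd.impI (Nd.impI ?_))
  · refine Nd.impE (Nd.andE1 h2.wkc.wkc) ?_
    refine Nd.impE (Nd.ax (show C.imp D ∈ _ by simp)) ?_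
    exact Nd.impE (Nd.andE2 h1.wkc.wkc) (Nd.ax (by simp))
  · refine Nd.impE (Nd.andE2 h2.wkc.wkc) ?_
    refine Nd.impE (Nd.ax (show C'.imp D' ∈ _ by simp)) ?_
    exact Nd.impE (Nd.andE1 h1.wkc.wkc) (Nd.ax (by simp))

/-- replacement: a substitution provably-equivalent to the identity (under Δ)
is provably equivalent to the identity on every formula. -/
theorem nd_repl {Δ : List (Form var par)} {σ : var → Form var par}
    (h : ∀ x, Nd Δ ((σ x).fiff (Form.v x))) :
    ∀ B : Form var par, Nd Δ ((Form.subst σ B).fiff B) := by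
  intro B
  induction B with
  | bot => exact nd_fiff_refl _
  | v x => exact h x
  | p q => exact nd_fiff_refl _
  | and C D ih1 ih2 => exact nd_fiff_and ih1 ih2
  | or C D ih1 ih2 => exact nd_fiff_or ih1 ih2
  | imp C D ih1 ih2 => exact nd_fiff_imp ih1 ih2

theorem eproj_to_eext {A E : Form var par} (h : EProjective A E) :
    EExtendable A E := by
  obtain ⟨θ, hadm, hiff⟩ := h
  have hndadm : ∀ x, Nd [A] ((θ x).fiff (Form.v x)) := fun x =>
    Nd.impE (nd_of_prv (hadm x)) (Nd.ax (by simp))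
  have hrepl : Nd [A] ((Form.subst θ A).fiff A) := nd_repl hndadm A
  have hAE : Prv false (A.imp E) := by
    have h1 : Nd [A] (Form.subst θ A) :=
      Nd.impE (Nd.andE2 hrepl) (Nd.ax (by simp))
    have h2 : Nd [A] E := Nd.impE (Nd.andE1 (nd_of_prv hiff)) h1
    exact prv_of_nd (Nd.impI h2)
  refine ⟨hAE, ?_⟩
  intro F V hmin hEf
  have hiffsem : ∀ w x, force F V w A →
      (V.val w (Sum.inl x) ↔ force F V w (θ x)) := by
    intro w x hw
    have hs := sound (hadm x) F V w w (F.refl w) hw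
    exact ⟨fun hx => hs.2 w (F.refl w) hx, fun hx => hs.1 w (F.refl w) hx⟩
  classical
  refine ⟨⟨fun w a => if w = F.root then
      (match a with
        | Sum.inl x => force F V F.root (θ x)
        | Sum.inr q => V.val F.root (Sum.inr q))
      else V.val w a, ?_⟩, ⟨?_, ?_⟩, ?_⟩
  · -- monotonicity
    intro w u a h hv
    by_cases hw : w = F.root <;> by_cases hu : u = F.root
    · subst hw; rw [if_pos rfl] at hv; rw [hu, if_pos rfl]; exact hv
    · subst hw
      rw [if_pos rfl] at hv
      rw [if_neg hu]
      cases a with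
      | inl x =>
          have h1 : force F V u (θ x) := force_mono h hv
          exact (hiffsem u x (hmin u hu)).2 h1
      | inr q => exact V.mono (F.root_le u) hv
    · subst hu
      rw [if_neg hw] at hv
      rw [if_pos rfl]
      cases a with
      | inl x =>
          have hwA := hmin w hw
          have h1 : force F V w (θ x) := (hiffsem w x hwA).1 hv
          exact force_mono h h1
      | inr q => exact V.mono h hv
    · rw [if_neg hw] at hv; rw [if_neg hu]; exact V.mono h hv
  · intro w hw a; simp only [if_neg hw]
  · intro q; simp
  · -- forcing of A everywhere
    intro w
    set V' : Val var par F := ⟨_, _⟩ with hV'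
    have key : ∀ (B : Form var par) (w : F.W),
        force F V' w B ↔ force F V w (Form.subst θ B) := by
      intro B
      induction B with
      | bot => intro w; simp [force, Form.subst]
      | v x =>
          intro w
          by_cases hw : w = F.root
          · subst hw
            show (if _ = F.root then _ else _) ↔ _
            rw [if_pos rfl]
            exact Iff.rfl
          · show (if w = F.root then _ else _) ↔ _
            rw [if_neg hw]
            exact hiffsem w x (hmin w hw)
      | p q =>
          intro w
          by_cases hw : w = F.root
          · subst hw
            show (if _ = F.root then _ else _) ↔ _
            rw [if_pos rfl]
            exact Iff.rfl
          · show (if w = F.root then _ else _) ↔ _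
            rw [if_neg hw]
            exact Iff.rfl
      | and C D ih1 ih2 => intro w; exact and_congr (ih1 w) (ih2 w)
      | or C D ih1 ih2 => intro w; exact or_congr (ih1 w) (ih2 w)
      | imp C D ih1 ih2 =>
          intro w
          exact forall_congr' fun u => forall_congr' fun hu => imp_congr (ih1 u) (ih2 u)
    rw [key A w]
    have hs := sound hiff F V w
    exact hs.2 w (F.refl w) (hEf w)

end GP
namespace GP
open Form
open scoped Classical
variable {var par : Type}

def subs : Form var par → List (Form var par)
  | .bot => [.bot]
  | .v x => [.v x]
  | .p q => [.p q]
  | .and A B => (A.and B) :: (subs A ++ subs B)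
  | .or A B => (A.or B) :: (subs A ++ subs B)
  | .imp A B => (A.imp B) :: (subs A ++ subs B)

theorem self_mem_subs (B : Form var par) : B ∈ subs B := by
  cases B <;> simp [subs]

theorem subs_and_mem {B C D : Form var par} (h : C.and D ∈ subs B) :
    C ∈ subs B ∧ D ∈ subs B := by
  induction B with
  | bot => simp [subs] at h
  | v x => simp [subs] at h
  | p q => simp [subs] at h
  | and B1 B2 ih1 ih2 =>
      simp only [subs, List.mem_cons, List.mem_append] at h ⊢
      rcases h with h | h | h
      · obtain ⟨rfl, rfl⟩ : C = B1 ∧ D = B2 := by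
          constructor <;> injection h <;> assumption
        exact ⟨Or.inr (Or.inl (self_mem_subs _)), Or.inr (Or.inr (self_mem_subs _))⟩
      · exact ⟨Or.inr (Or.inl (ih1 h).1), Or.inr (Or.inl (ih1 h).2)⟩
      · exact ⟨Or.inr (Or.inr (ih2 h).1), Or.inr (Or.inr (ih2 h).2)⟩
  | or B1 B2 ih1 ih2 =>
      simp only [subs, List.mem_cons, List.mem_append] at h ⊢
      rcases h with h | h | h
      · exact absurd h (by simp)
      · exact ⟨Or.inr (Or.inl (ih1 h).1), Or.inr (Or.inl (ih1 h).2)⟩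
      · exact ⟨Or.inr (Or.inr (ih2 h).1), Or.inr (Or.inr (ih2 h).2)⟩
  | imp B1 B2 ih1 ih2 =>
      simp only [subs, List.mem_cons, List.mem_append] at h ⊢
      rcases h with h | h | h
      · exact absurd h (by simp)
      · exact ⟨Or.inr (Or.inl (ih1 h).1), Or.inr (Or.inl (ih1 h).2)⟩
      · exact ⟨Or.inr (Or.inr (ih2 h).1), Or.inr (Or.inr (ih2 h).2)⟩

theorem subs_or_mem {B C D : Form var par} (h : C.or D ∈ subs B) :
    C ∈ subs B ∧ D ∈ subs B := by
  induction B with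
  | bot => simp [subs] at h
  | v x => simp [subs] at h
  | p q => simp [subs] at h
  | and B1 B2 ih1 ih2 =>
      simp only [subs, List.mem_cons, List.mem_append] at h ⊢
      rcases h with h | h | h
      · exact absurd h (by simp)
      · exact ⟨Or.inr (Or.inl (ih1 h).1), Or.inr (Or.inl (ih1 h).2)⟩
      · exact ⟨Or.inr (Or.inr (ih2 h).1), Or.inr (Or.inr (ih2 h).2)⟩
  | or B1 B2 ih1 ih2 =>
      simp only [subs, List.mem_cons, List.mem_append] at h ⊢
      rcases h with h | h | h
      · obtain ⟨rfl, rfl⟩ : C = B1 ∧ D = B2 := by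
          constructor <;> injection h <;> assumption
        exact ⟨Or.inr (Or.inl (self_mem_subs _)), Or.inr (Or.inr (self_mem_subs _))⟩
      · exact ⟨Or.inr (Or.inl (ih1 h).1), Or.inr (Or.inl (ih1 h).2)⟩
      · exact ⟨Or.inr (Or.inr (ih2 h).1), Or.inr (Or.inr (ih2 h).2)⟩
  | imp B1 B2 ih1 ih2 =>
      simp only [subs, List.mem_cons, List.mem_append] at h ⊢
      rcases h with h | h | h
      · exact absurd h (by simp)
      · exact ⟨Or.inr (Or.inl (ih1 h).1), Or.inr (Or.inl (ih1 h).2)⟩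
      · exact ⟨Or.inr (Or.inr (ih2 h).1), Or.inr (Or.inr (ih2 h).2)⟩

theorem subs_imp_mem {B C D : Form var par} (h : C.imp D ∈ subs B) :
    C ∈ subs B ∧ D ∈ subs B := by
  induction B with
  | bot => simp [subs] at h
  | v x => simp [subs] at h
  | p q => simp [subs] at h
  | and B1 B2 ih1 ih2 =>
      simp only [subs, List.mem_cons, List.mem_append] at h ⊢
      rcases h with h | h | h
      · exact absurd h (by simp)
      · exact ⟨Or.inr (Or.inl (ih1 h).1), Or.inr (Or.inl (ih1 h).2)⟩
      · exact ⟨Or.inr (Or.inr (ih2 h).1), Or.inr (Or.inr (ih2 h).2)⟩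
  | or B1 B2 ih1 ih2 =>
      simp only [subs, List.mem_cons, List.mem_append] at h ⊢
      rcases h with h | h | h
      · exact absurd h (by simp)
      · exact ⟨Or.inr (Or.inl (ih1 h).1), Or.inr (Or.inl (ih1 h).2)⟩
      · exact ⟨Or.inr (Or.inr (ih2 h).1), Or.inr (Or.inr (ih2 h).2)⟩
  | imp B1 B2 ih1 ih2 =>
      simp only [subs, List.mem_cons, List.mem_append] at h ⊢
      rcases h with h | h | h
      · obtain ⟨rfl, rfl⟩ : C = B1 ∧ D = B2 := by
          constructor <;> injection h <;> assumption
        exact ⟨Or.inr (Or.inl (self_mem_subs _)), Or.inr (Or.inr (self_mem_subs _))⟩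
      · exact ⟨Or.inr (Or.inl (ih1 h).1), Or.inr (Or.inl (ih1 h).2)⟩
      · exact ⟨Or.inr (Or.inr (ih2 h).1), Or.inr (Or.inr (ih2 h).2)⟩

def Ded (T : Finset (Form var par)) (C : Form var par) : Prop := Nd T.toList C

theorem lindenbaum (Γb : List (Form var par))
    (hor : ∀ C D : Form var par, C.or D ∈ Γb → C ∈ Γb ∧ D ∈ Γb)
    (G : Form var par) :
    ∀ (n : ℕ) (T : Finset (Form var par)), (Γb.toFinset \ T).card = n →
      (∀ C ∈ T, C ∈ Γb) → ¬ Ded T G →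
      ∃ T' : Finset (Form var par), T ⊆ T' ∧ (∀ C ∈ T', C ∈ Γb) ∧
        (∀ C ∈ Γb, Ded T' C → C ∈ T') ∧
        (∀ C D : Form var par, C.or D ∈ T' → C ∈ T' ∨ D ∈ T') ∧
        ¬ Ded T' G := by
  intro n
  induction n using Nat.strong_induction_on with
  | _ n ih =>
  intro T hcard hTsub hTG
  have hstep : ∀ C : Form var par, C ∈ Γb → C ∉ T → ¬ Ded (insert C T) G →
      ∃ T' : Finset (Form var par), insert C T ⊆ T' ∧ (∀ C ∈ T', C ∈ Γb) ∧
        (∀ C ∈ Γb, Ded T' C → C ∈ T') ∧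
        (∀ C D : Form var par, C.or D ∈ T' → C ∈ T' ∨ D ∈ T') ∧
        ¬ Ded T' G := by
    intro C hCΓ hCT hnd
    have hsub : Γb.toFinset \ insert C T ⊆ Γb.toFinset \ T :=
      Finset.sdiff_subset_sdiff (Finset.Subset.refl _) (Finset.subset_insert _ _)
    have hlt : (Γb.toFinset \ insert C T).card < n := by
      rw [← hcard]
      apply Finset.card_lt_card
      refine (Finset.ssubset_iff_of_subset hsub).2 ⟨C, ?_, ?_⟩
      · exact Finset.mem_sdiff.2 ⟨List.mem_toFinset.2 hCΓ, hCT⟩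
      · simp
    exact ih _ hlt (insert C T) rfl
      (fun x hx => (Finset.mem_insert.1 hx).elim (fun h => h ▸ hCΓ) (hTsub x)) hnd
  by_cases h1 : ∃ C : Form var par, C ∈ Γb ∧ Ded T C ∧ C ∉ T
  · obtain ⟨C, hCΓ, hded, hCT⟩ := h1
    have hnd : ¬ Ded (insert C T) G := by
      intro hd
      have h2 : Nd (C :: T.toList) G := hd.wk (by
        intro x hx
        rw [Finset.mem_toList] at hx
        rcases Finset.mem_insert.1 hx with rfl | hx
        · exact List.mem_cons_self
        · exact List.mem_cons_of_mem _ (Finset.mem_toList.2 hx))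
      exact hTG (Nd.impE (Nd.impI h2) hded)
    obtain ⟨T', hs, h2, h3, h4, h5⟩ := hstep C hCΓ hCT hnd
    exact ⟨T', (Finset.subset_insert _ _).trans hs, h2, h3, h4, h5⟩
  · by_cases h2 : ∃ C D : Form var par, (C.or D) ∈ T ∧ C ∉ T ∧ D ∉ T
    · obtain ⟨C, D, hor', hCT, hDT⟩ := h2
      have hCD : C ∈ Γb ∧ D ∈ Γb := hor C D (hTsub _ hor')
      have hbranch : ¬ Ded (insert C T) G ∨ ¬ Ded (insert D T) G := by
        by_contra hc
        push_neg at hc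
        have hCc : Nd (C :: T.toList) G := hc.1.wk (by
          intro x hx
          rw [Finset.mem_toList] at hx
          rcases Finset.mem_insert.1 hx with rfl | hx
          · exact List.mem_cons_self
          · exact List.mem_cons_of_mem _ (Finset.mem_toList.2 hx))
        have hDc : Nd (D :: T.toList) G := hc.2.wk (by
          intro x hx
          rw [Finset.mem_toList] at hx
          rcases Finset.mem_insert.1 hx with rfl | hx
          · exact List.mem_cons_self
          · exact List.mem_cons_of_mem _ (Finset.mem_toList.2 hx))
        exact hTG (Nd.orE (Nd.ax (Finset.mem_toList.2 hor')) hCc hDc)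
      rcases hbranch with hnd | hnd
      · obtain ⟨T', hs, h2', h3, h4, h5⟩ := hstep C hCD.1 hCT hnd
        exact ⟨T', (Finset.subset_insert _ _).trans hs, h2', h3, h4, h5⟩
      · obtain ⟨T', hs, h2', h3, h4, h5⟩ := hstep D hCD.2 hDT hnd
        exact ⟨T', (Finset.subset_insert _ _).trans hs, h2', h3, h4, h5⟩
    · push_neg at h1 h2
      exact ⟨T, Finset.Subset.refl _, hTsub,
        fun C hC hd => by_contra fun hCT => hCT (h1 C hC hd),
        fun C D hCD => by
          by_contra hc
          push_neg at hc
          exact hc.2 (h2 C D hCD hc.1),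
        hTG⟩

theorem complete {B : Form var par}
    (h : ∀ (F : Frame) (V : Val var par F) (w : F.W), force F V w B) :
    Prv false B := by
  classical
  by_contra hn
  have hor : ∀ C D : Form var par, C.or D ∈ subs B → C ∈ subs B ∧ D ∈ subs B :=
    fun C D h => subs_or_mem h
  have hndB : ¬ Ded (∅ : Finset (Form var par)) B := by
    intro hd
    have h2 : Nd ((∅ : Finset (Form var par)).toList) B := hd
    rw [Finset.toList_empty] at h2
    exact hn (prv_of_nd h2)
  obtain ⟨T0, _, hT0sub, hT0cl, hT0pr, hT0nd⟩ :=
    lindenbaum (subs B) hor B _ ∅ rfl (by simp) hndB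
  set P : Finset (Form var par) → Prop := fun T =>
    (∀ C ∈ T, C ∈ subs B) ∧ (∀ C ∈ subs B, Ded T C → C ∈ T) ∧
    (∀ C D : Form var par, C.or D ∈ T → C ∈ T ∨ D ∈ T) ∧
    (¬ Ded T Form.bot) ∧ T0 ⊆ T with hP
  haveI hfin : Finite (Subtype P) := by
    refine Finite.of_injective
      (fun T : Subtype P =>
        (⟨T.1, ?_⟩ : {s : Finset (Form var par) // s ∈ (subs B).toFinset.powerset})) ?_
    · rw [Finset.mem_powerset]
      intro C hC
      exact List.mem_toFinset.2 (T.2.1 C hC)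
    · intro a b hab
      have h2 : a.1 = b.1 := by simpa using congrArg Subtype.val hab
      exact Subtype.ext h2
  have hT0P : P T0 := ⟨hT0sub, hT0cl, hT0pr, fun hd => hT0nd (Nd.botE hd),
    Finset.Subset.refl _⟩
  let Fc : Frame := ⟨Subtype P, Fintype.ofFinite _, fun T T' => T.1 ⊆ T'.1,
    fun T => Finset.Subset.refl _, fun a b c h1 h2 => h1.trans h2,
    ⟨T0, hT0P⟩, fun T => T.2.2.2.2.2⟩
  let Vc : Val var par Fc := ⟨fun T a =>
      (match a with | Sum.inl x => Form.v x | Sum.inr q => Form.p q) ∈ T.1,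
    fun {w u a} hle hv => hle hv⟩
  have truth : ∀ (C : Form var par), C ∈ subs B →
      ∀ T : Fc.W, force Fc Vc T C ↔ C ∈ T.1 := by
    intro C
    induction C with
    | bot =>
        intro _ T
        constructor
        · intro hf; exact hf.elim
        · intro hb; exact (T.2.2.2.2.1 (Nd.ax (Finset.mem_toList.2 hb))).elim
    | v x => intro _ T; exact Iff.rfl
    | p q => intro _ T; exact Iff.rfl
    | and C D ihC ihD =>
        intro hmem T
        obtain ⟨hC, hD⟩ := subs_and_mem hmem
        show force Fc Vc T C ∧ force Fc Vc T D ↔ _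
        rw [ihC hC T, ihD hD T]
        constructor
        · rintro ⟨h1, h2⟩
          exact T.2.2.1 _ hmem
            (Nd.andI (Nd.ax (Finset.mem_toList.2 h1)) (Nd.ax (Finset.mem_toList.2 h2)))
        · intro h1
          exact ⟨T.2.2.1 _ hC (Nd.andE1 (Nd.ax (Finset.mem_toList.2 h1))),
                 T.2.2.1 _ hD (Nd.andE2 (Nd.ax (Finset.mem_toList.2 h1)))⟩
    | or C D ihC ihD =>
        intro hmem T
        obtain ⟨hC, hD⟩ := subs_or_mem hmem
        show force Fc Vc T C ∨ force Fc Vc T D ↔ _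
        rw [ihC hC T, ihD hD T]
        constructor
        · rintro (h1 | h1)
          · exact T.2.2.1 _ hmem (Nd.orI1 (Nd.ax (Finset.mem_toList.2 h1)))
          · exact T.2.2.1 _ hmem (Nd.orI2 (Nd.ax (Finset.mem_toList.2 h1)))
        · intro h1
          exact T.2.2.2.1 C D h1
    | imp C D ihC ihD =>
        intro hmem T
        obtain ⟨hC, hD⟩ := subs_imp_mem hmem
        constructor
        · intro hf
          have hins : Ded (insert C T.1) D := by
            by_contra hnd
            obtain ⟨T', hsub', hΓ', hcl', hpr', hnd'⟩ := lindenbaum (subs B) hor D _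
              (insert C T.1) rfl
              (fun x hx => (Finset.mem_insert.1 hx).elim (fun h => h ▸ hC) (T.2.1 x)) hnd
            have hPT' : P T' := ⟨hΓ', hcl', hpr', fun hb => hnd' (Nd.botE hb),
              T.2.2.2.2.2.trans ((Finset.subset_insert _ _).trans hsub')⟩
            have hle : T.1 ⊆ T' := (Finset.subset_insert _ _).trans hsub'
            have hCf : force Fc Vc ⟨T', hPT'⟩ C :=
              (ihC hC ⟨T', hPT'⟩).2 (hsub' (Finset.mem_insert_self _ _))
            have hDf := hf ⟨T', hPT'⟩ hle hCf
            exact hnd' (Nd.ax (Finset.mem_toList.2 ((ihD hD ⟨T', hPT'⟩).1 hDf)))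
          have hded : Ded T.1 (C.imp D) := Nd.impI (hins.wk (by
            intro x hx
            rw [Finset.mem_toList] at hx
            rcases Finset.mem_insert.1 hx with rfl | hx
            · exact List.mem_cons_self
            · exact List.mem_cons_of_mem _ (Finset.mem_toList.2 hx)))
          exact T.2.2.1 _ hmem hded
        · intro hmem' T' hle hCf
          have hC' : C ∈ T'.1 := (ihC hC T').1 hCf
          have hded : Ded T'.1 D :=
            Nd.impE (Nd.ax (Finset.mem_toList.2 (hle hmem')))
              (Nd.ax (Finset.mem_toList.2 hC'))
          exact (ihD hD T').2 (T'.2.2.1 _ hD hded)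
  have hforce := h Fc Vc Fc.root
  have hBmem : B ∈ T0 := (truth B (self_mem_subs B) Fc.root).1 hforce
  exact hT0nd (Nd.ax (Finset.mem_toList.2 hBmem))

end GP
namespace GP
open Form
open scoped Classical
variable {var par : Type}

theorem pw_getElem {α : Type} {R : α → α → Prop} {l : List α} (h : l.Pairwise R) :
    ∀ (i j : ℕ) (hi : i < l.length) (hj : j < l.length), i < j → R l[i] l[j] := by
  induction h with
  | nil => intro i j hi; exact absurd hi (by simp)
  | @cons a t hr hpw ih =>
      intro i j hi hj hij
      match i, j with
      | 0, j+1 =>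
          simp only [List.getElem_cons_zero, List.getElem_cons_succ]
          exact hr _ (List.getElem_mem _)
      | i+1, j+1 =>
          simp only [List.getElem_cons_succ]
          exact ih i j (by simpa using hi) (by simpa using hj) (by omega)

theorem sublist_eq_of_mem_iff {α : Type} :
    ∀ {l l1 l2 : List α}, l.Nodup → List.Sublist l1 l → List.Sublist l2 l →
      (∀ x, x ∈ l1 ↔ x ∈ l2) → l1 = l2 := by
  intro l
  induction l with
  | nil => intro l1 l2 _ h1 h2 _; rw [List.sublist_nil.1 h1, List.sublist_nil.1 h2]
  | cons a t ih =>
      intro l1 l2 hnd h1 h2 hm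
      have hat : a ∉ t := (List.nodup_cons.1 hnd).1
      have hndt : t.Nodup := (List.nodup_cons.1 hnd).2
      rcases List.sublist_cons_iff.1 h1 with h1' | ⟨r1, rfl, hr1⟩
      · rcases List.sublist_cons_iff.1 h2 with h2' | ⟨r2, rfl, hr2⟩
        · exact ih hndt h1' h2' hm
        · exact absurd (h1'.subset ((hm a).2 (List.mem_cons_self))) hat
      · rcases List.sublist_cons_iff.1 h2 with h2' | ⟨r2, rfl, hr2⟩
        · exact absurd (h2'.subset ((hm a).1 (List.mem_cons_self))) hat
        · have hr : r1 = r2 := by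
            refine ih hndt hr1 hr2 (fun x => ⟨fun hx => ?_, fun hx => ?_⟩)
            · rcases List.mem_cons.1 ((hm x).1 (List.mem_cons_of_mem a hx)) with rfl | hx2
              · exact absurd (hr1.subset hx) hat
              · exact hx2
            · rcases List.mem_cons.1 ((hm x).2 (List.mem_cons_of_mem a hx)) with rfl | hx2
              · exact absurd (hr2.subset hx) hat
              · exact hx2
          rw [hr]

/-- the Ghilardi substitution for a set `X` of variables -/
def thX (A : Form var par) (X : List var) (x : var) : Form var par :=
  if x ∈ X then A.imp (Form.v x) else A.and (Form.v x)

/-- iterated substitution along a list of variable sets (head outermost) -/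
def csub (A : Form var par) : List (List var) → Form var par → Form var par
  | [], B => B
  | X :: L, B => Form.subst (thX A X) (csub A L B)

def VAl (A : Form var par) : List var := (fvars A).dedup

def XSk (A : Form var par) : ℕ → List (List var)
  | 0 => List.sublistsLen 0 (VAl A)
  | k+1 => List.sublistsLen (k+1) (VAl A) ++ XSk A k

def XSl (A : Form var par) : List (List var) := XSk A (VAl A).length

theorem mem_XSk (A : Form var par) {X : List var} :
    ∀ {k}, X ∈ XSk A k ↔ (List.Sublist X (VAl A) ∧ X.length ≤ k) := by
  intro k
  induction k with
  | zero =>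
      simp only [XSk, List.mem_sublistsLen, Nat.le_zero]
  | succ k ih =>
      simp only [XSk, List.mem_append, List.mem_sublistsLen, ih]
      constructor
      · rintro (⟨h1, h2⟩ | ⟨h1, h2⟩) <;> exact ⟨h1, by omega⟩
      · rintro ⟨h1, h2⟩
        rcases Nat.lt_or_ge X.length (k+1) with h | h
        · exact Or.inr ⟨h1, by omega⟩
        · exact Or.inl ⟨h1, by omega⟩

theorem mem_XSl (A : Form var par) {X : List var} : X ∈ XSl A ↔ List.Sublist X (VAl A) := by
  rw [XSl, mem_XSk]
  exact ⟨And.left, fun h => ⟨h, h.length_le⟩⟩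

theorem XS_pairwise (A : Form var par) :
    ∀ k, (XSk A k).Pairwise (fun X Y => Y.length ≤ X.length) := by
  intro k
  induction k with
  | zero =>
      refine List.pairwise_iff_forall_sublist.2 ?_
      intro a b hab
      have ha : a ∈ List.sublistsLen 0 (VAl A) := hab.subset (by simp)
      have hb : b ∈ List.sublistsLen 0 (VAl A) := hab.subset (by simp)
      rw [(List.mem_sublistsLen.1 ha).2, (List.mem_sublistsLen.1 hb).2]
  | succ k ih =>
      rw [XSk]
      refine List.pairwise_append.2 ⟨?_, ih, ?_⟩
      · refine List.pairwise_iff_forall_sublist.2 ?_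
        intro a b hab
        have ha : a ∈ List.sublistsLen (k+1) (VAl A) := hab.subset (by simp)
        have hb : b ∈ List.sublistsLen (k+1) (VAl A) := hab.subset (by simp)
        rw [(List.mem_sublistsLen.1 ha).2, (List.mem_sublistsLen.1 hb).2]
      · intro a ha b hb
        have h1 : a.length = k+1 := (List.mem_sublistsLen.1 ha).2
        have h2 : b.length ≤ k := ((mem_XSk A).1 hb).2
        omega

theorem XS_nodup (A : Form var par) : ∀ k, (XSk A k).Nodup := by
  intro k
  induction k with
  | zero => exact List.nodup_sublistsLen 0 (List.nodup_dedup _)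
  | succ k ih =>
      rw [XSk, List.nodup_append]
      refine ⟨List.nodup_sublistsLen _ (List.nodup_dedup _), ih, ?_⟩
      intro a ha b hb hab
      subst hab
      have h1 : a.length = k+1 := (List.mem_sublistsLen.1 ha).2
      have h2 : a.length ≤ k := ((mem_XSk A).1 hb).2
      omega

theorem XS_order (A : Form var par) {i j : ℕ}
    (hi : i < (XSl A).length) (hj : j < (XSl A).length)
    (hsub : ∀ x ∈ (XSl A)[j], x ∈ (XSl A)[i]) : i ≤ j := by
  by_contra hc
  push_neg at hc
  have hpw : (XSl A)[i].length ≤ (XSl A)[j].length :=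
    pw_getElem (XS_pairwise A _) j i hj hi hc
  have hXi : List.Sublist ((XSl A)[i]) (VAl A) := (mem_XSl A).1 (List.getElem_mem hi)
  have hXj : List.Sublist ((XSl A)[j]) (VAl A) := (mem_XSl A).1 (List.getElem_mem hj)
  have hndV : (VAl A).Nodup := List.nodup_dedup _
  have hndi : (XSl A)[i].Nodup := hXi.nodup hndV
  have hndj : (XSl A)[j].Nodup := hXj.nodup hndV
  have hfin : (XSl A)[j].toFinset ⊆ (XSl A)[i].toFinset := fun x hx =>
    List.mem_toFinset.2 (hsub x (List.mem_toFinset.1 hx))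
  have hci : (XSl A)[i].toFinset.card = (XSl A)[i].length :=
    List.toFinset_card_of_nodup hndi
  have hcj : (XSl A)[j].toFinset.card = (XSl A)[j].length :=
    List.toFinset_card_of_nodup hndj
  have hcard : (XSl A)[j].toFinset.card ≤ (XSl A)[i].toFinset.card :=
    Finset.card_le_card hfin
  have heqF : (XSl A)[j].toFinset = (XSl A)[i].toFinset := by
    apply Finset.eq_of_subset_of_card_le hfin
    omega
  have heq : (XSl A)[j] = (XSl A)[i] := by
    refine sublist_eq_of_mem_iff hndV hXj hXi (fun x => ?_)
    constructor
    · intro hx; exact List.mem_toFinset.1 (heqF ▸ List.mem_toFinset.2 hx)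
    · intro hx; exact List.mem_toFinset.1 (heqF ▸ List.mem_toFinset.2 hx)
  have hne : (XSl A)[j] ≠ (XSl A)[i] :=
    pw_getElem (XS_nodup A (VAl A).length) j i hj hi hc
  exact hne heq

end GP
namespace GP
open Form
open scoped Classical
variable {var par : Type}

def chainV (A : Form var par) {F : Frame} (V : Val var par F) :
    List (List var) → Val var par F
  | [] => V
  | X :: L => chainV A (vcomp V (thX A X)) L

theorem force_chain {A B : Form var par} {F : Frame} :
    ∀ {L : List (List var)} {V : Val var par F} {w : F.W},
      force F (chainV A V L) w B ↔ force F V w (csub A L B) := by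
  intro L
  induction L with
  | nil => intro V w; exact Iff.rfl
  | cons X L ih => intro V w; exact ih.trans force_vcomp

theorem chain_append (A : Form var par) {F : Frame} (L1 L2 : List (List var)) :
    ∀ (V : Val var par F), chainV A V (L1 ++ L2) = chainV A (chainV A V L1) L2 := by
  induction L1 with
  | nil => intro V; rfl
  | cons X L ih => intro V; exact ih (vcomp V (thX A X))

theorem chain_par {A : Form var par} {F : Frame} :
    ∀ {L : List (List var)} {V : Val var par F} {w : F.W} {q : par},
      (chainV A V L).val w (Sum.inr q) ↔ V.val w (Sum.inr q) := by
  intro L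
  induction L with
  | nil => intro V w q; exact Iff.rfl
  | cons X L ih => intro V w q; exact ih.trans Iff.rfl

theorem thX_frozen {A : Form var par} {F : Frame} {V : Val var par F} {u : F.W}
    (hu : force F V u A) (X : List var) :
    ∀ (v : F.W) (a : var ⊕ par), F.le u v →
      ((vcomp V (thX A X)).val v a ↔ V.val v a) := by
  intro v a hv
  cases a with
  | inr q => exact Iff.rfl
  | inl x =>
      show force F V v (thX A X x) ↔ V.val v (Sum.inl x)
      unfold thX
      by_cases hx : x ∈ X
      · rw [if_pos hx]
        constructor
        · intro h; exact h v (F.refl v) (force_mono hv hu)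
        · intro h t hvt _; exact V.mono hvt h
      · rw [if_neg hx]
        exact ⟨fun h => h.2, fun h => ⟨force_mono hv hu, h⟩⟩

theorem vcomp_update {A : Form var par} {F : Frame} {V : Val var par F} {w : F.W}
    (hw : ¬ force F V w A) (X : List var) (x : var) :
    (vcomp V (thX A X)).val w (Sum.inl x) ↔
      (x ∈ X ∧ force F V w (A.imp (Form.v x))) := by
  show force F V w (thX A X x) ↔ _
  unfold thX
  by_cases hx : x ∈ X
  · rw [if_pos hx]
    exact ⟨fun h => ⟨hx, h⟩, fun h => h.2⟩
  · rw [if_neg hx]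
    exact ⟨fun h => absurd h.1 hw, fun h => absurd h.1 hx⟩

/-- The core semantic lemma: in any model of `E`, every node forces `θ_A(A)`. -/
theorem core {A E : Form var par} (hE : E.varFree) (hext : EExtendable A E)
    (F : Frame) (V : Val var par F) (hEf : ∀ w, force F V w E) (w0 : F.W) :
    force F V w0 (csub A (XSl A) A) := by
  haveI := F.fin
  set N := (XSl A).length with hN
  set Vi : ℕ → Val var par F := fun i => chainV A V ((XSl A).take i) with hVi
  have hstep : ∀ (i : ℕ) (hi : i < (XSl A).length),
      Vi (i+1) = vcomp (Vi i) (thX A ((XSl A)[i])) := by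
    intro i hi
    show chainV A V ((XSl A).take (i+1)) = _
    rw [List.take_succ, List.getElem?_eq_getElem hi]
    rw [chain_append]
    rfl
  have hstay : ∀ i, N ≤ i → Vi (i+1) = Vi i := by
    intro i hi
    show chainV A V ((XSl A).take (i+1)) = chainV A V ((XSl A).take i)
    rw [List.take_of_length_le (by omega), List.take_of_length_le (by omega)]
  have hfreeze : ∀ (i j : ℕ), i ≤ j → ∀ u, force F (Vi i) u A →
      (∀ v a, F.le u v → ((Vi j).val v a ↔ (Vi i).val v a)) ∧ force F (Vi j) u A := by
    intro i j
    induction j with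
    | zero =>
        intro hij u hu
        have hi0 : i = 0 := by omega
        subst hi0
        exact ⟨fun v a _ => Iff.rfl, hu⟩
    | succ j ihj =>
        intro hij u hu
        rcases Nat.lt_or_ge i (j+1) with hlt | hge
        · have hij' : i ≤ j := by omega
          obtain ⟨hagree, hforce⟩ := ihj hij' u hu
          rcases Nat.lt_or_ge j N with hjN | hjN
          · rw [hstep j (by omega)]
            constructor
            · intro v a hv
              exact (thX_frozen hforce _ v a hv).trans (hagree v a hv)
            · refine (force_ext ?_).mpr hforce
              intro v hv a _
              exact thX_frozen hforce _ v a hv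
          · rw [hstay j hjN]
            exact ⟨hagree, hforce⟩
        · have hieq : i = j+1 := by omega
          subst hieq
          exact ⟨fun v a _ => Iff.rfl, hu⟩
  have hVN : chainV A V (XSl A) = Vi N := by
    show _ = chainV A V ((XSl A).take N)
    rw [hN, List.take_length]
  have main : ∀ (n : ℕ) (w : F.W), ({u | F.le w u}).ncard ≤ n → force F (Vi N) w A := by
    intro n
    induction n with
    | zero =>
        intro w hw
        exfalso
        have h1 : 0 < ({u | F.le w u}).ncard := by
          rw [Set.ncard_pos (Set.toFinite _)]
          exact ⟨w, F.refl w⟩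
        omega
    | succ n ihn =>
        intro w hw
        have IHstrict : ∀ u, F.le w u → ¬ F.le u w → force F (Vi N) u A := by
          intro u h1 h2
          apply ihn u
          have hss : {v | F.le u v} ⊂ {v | F.le w v} := by
            constructor
            · intro v hv; exact F.trans _ _ _ h1 hv
            · intro hsup
              exact h2 (hsup (F.refl w))
          have hlt := Set.ncard_lt_ncard hss (Set.toFinite _)
          omega
        by_cases hdone : ∃ i, i ≤ N ∧ force F (Vi i) w A
        · obtain ⟨i, hiN, hfi⟩ := hdone
          exact (hfreeze i N hiN w hfi).2
        · exfalso
          push_neg at hdone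
          -- the representatives submodel
          set S : Set F.W := {u | F.le w u ∧ (F.le u w → u = w)} with hSdef
          have hw0S : w ∈ S := ⟨F.refl w, fun _ => rfl⟩
          have hup : ∀ u ∈ S, F.le w u := fun u hu => hu.1
          have hmemS : ∀ u, F.le w u → ¬ F.le u w → u ∈ S :=
            fun u h1 h2 => ⟨h1, fun h => absurd h h2⟩
          have hdense : ∀ u ∈ S, ∀ v, F.le u v → ∃ v' ∈ S, F.le v v' ∧ F.le v' v := by
            intro u hu v hv
            by_cases hvw : F.le v w
            · have h2 : u = w := hu.2 (F.trans _ _ _ hv hvw)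
              exact ⟨w, hw0S, hvw, h2 ▸ hv⟩
            · exact ⟨v, ⟨F.trans _ _ _ hu.1 hv, fun h => absurd h hvw⟩, F.refl v, F.refl v⟩
          have hVSA : ∀ u : (subframe F S w hw0S hup).W,
              u ≠ (subframe F S w hw0S hup).root →
              force (subframe F S w hw0S hup) (subval (Vi N) S w hw0S hup) u A := by
            intro u hne
            have hu1 : u.1 ≠ w := fun h => hne (Subtype.ext h)
            have hstrict : ¬ F.le u.1 w := fun h => hu1 (u.2.2 h)
            exact (force_sub hdense u).2 (IHstrict u.1 u.2.1 hstrict)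
          have hVSE : ∀ u : (subframe F S w hw0S hup).W,
              force (subframe F S w hw0S hup) (subval (Vi N) S w hw0S hup) u E := by
            intro u
            refine (force_sub hdense u).2 ?_
            refine (force_ext ?_).mpr (hEf u.1)
            intro v hv a ha
            cases a with
            | inl x => exact absurd ha (occ_not_var hE)
            | inr q => exact chain_par
          obtain ⟨U', hpar, hUA⟩ := hext.2 _ _ hVSA hVSE
          set δL : List var :=
            (VAl A).filter (fun x => decide (U'.val (subframe F S w hw0S hup).root (Sum.inl x)))
            with hδdef
          have hδx : ∀ x, x ∈ δL ↔
              (x ∈ VAl A ∧ U'.val (subframe F S w hw0S hup).root (Sum.inl x)) := by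
            intro x
            simp [hδdef, List.mem_filter]
          have hδmem : δL ∈ XSl A := (mem_XSl A).2 List.filter_sublist
          obtain ⟨s, hsN, hsEq⟩ := List.mem_iff_getElem.1 hδmem
          have hfinalval : ∀ u (h1 : F.le w u) (h2 : ¬ F.le u w),
              ∀ x ∈ δL, (Vi N).val u (Sum.inl x) := by
            intro u h1 h2 x hx
            have hUroot : U'.val (subframe F S w hw0S hup).root (Sum.inl x) := ((hδx x).1 hx).2
            have hle2 : (subframe F S w hw0S hup).le (subframe F S w hw0S hup).root
                ⟨u, hmemS u h1 h2⟩ := h1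
            have hUval : U'.val ⟨u, hmemS u h1 h2⟩ (Sum.inl x) := U'.mono hle2 hUroot
            have hne : (⟨u, hmemS u h1 h2⟩ : (subframe F S w hw0S hup).W) ≠
                (subframe F S w hw0S hup).root := by
              intro h
              have : u = w := congrArg Subtype.val h
              exact h2 (this ▸ F.refl u)
            exact (hpar.1 _ hne _).mpr hUval
          have hentry : ∀ u, F.le w u → ¬ F.le u w →
              ∃ j, j ≤ s+1 ∧ force F (Vi j) u A := by
            intro u h1 h2
            have hNu : force F (Vi N) u A := IHstrict u h1 h2
            have hexu : ∃ j, force F (Vi j) u A := ⟨_, hNu⟩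
            have hj : force F (Vi (Nat.find hexu)) u A := Nat.find_spec hexu
            have hjN : Nat.find hexu ≤ N := Nat.find_min' hexu hNu
            refine ⟨Nat.find hexu, ?_, hj⟩
            rcases Nat.eq_zero_or_pos (Nat.find hexu) with hj0 | hj0
            · omega
            · have heN : Nat.find hexu - 1 < (XSl A).length := by omega
              have hnot : ¬ force F (Vi (Nat.find hexu - 1)) u A :=
                Nat.find_min hexu (by omega)
              have hagreeN := (hfreeze (Nat.find hexu) N hjN u hj).1
              have hsubset : ∀ x ∈ (XSl A)[s], x ∈ (XSl A)[Nat.find hexu - 1] := by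
                intro x hx
                rw [hsEq] at hx
                have hNx : (Vi N).val u (Sum.inl x) := hfinalval u h1 h2 x hx
                have hjx : (Vi (Nat.find hexu)).val u (Sum.inl x) :=
                  (hagreeN u _ (F.refl u)).1 hNx
                have hjx' : (vcomp (Vi (Nat.find hexu - 1))
                    (thX A ((XSl A)[Nat.find hexu - 1]))).val u (Sum.inl x) := by
                  rw [← hstep _ heN]
                  have hrw : Nat.find hexu - 1 + 1 = Nat.find hexu := by omega
                  rw [hrw]
                  exact hjx
                exact ((vcomp_update hnot _ x).1 hjx').1
              have := XS_order A heN hsN hsubset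
              omega
          have hs1N : s + 1 ≤ N := by omega
          have need1 : ∀ u, F.le w u → ¬ F.le u w →
              ∀ a, ((Vi (s+1)).val u a ↔ (Vi N).val u a) := by
            intro u h1 h2 a
            obtain ⟨j, hjs, hj⟩ := hentry u h1 h2
            have t1 := (hfreeze j (s+1) hjs u hj).1 u a (F.refl u)
            have t2 := (hfreeze j N (by omega) u hj).1 u a (F.refl u)
            exact t1.trans t2.symm
          have need2 : ∀ u, F.le w u → ¬ F.le u w → force F (Vi s) u A →
              ∀ x ∈ δL, (Vi s).val u (Sum.inl x) := by
            intro u h1 h2 hfs x hx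
            exact ((hfreeze s N (by omega) u hfs).1 u _ (F.refl u)).1
              (hfinalval u h1 h2 x hx)
          have hnots : ¬ force F (Vi s) w A := hdone s (by omega)
          have hC1 : ∀ x ∈ δL, force F (Vi s) w (A.imp (Form.v x)) := by
            intro x hx v hwv hvA
            by_cases hvw : F.le v w
            · exact absurd (force_mono hvw hvA) hnots
            · exact need2 v hwv hvw hvA x hx
          have hvalw : ∀ x, ((Vi (s+1)).val w (Sum.inl x) ↔ x ∈ δL) := by
            intro x
            rw [hstep s (by omega)]
            refine (vcomp_update hnots _ x).trans ?_
            rw [hsEq]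
            exact ⟨fun h => h.1, fun hx => ⟨hx, hC1 x hx⟩⟩
          have hC3 : force F (Vi (s+1)) w A := by
            refine (force_sub (V := Vi (s+1)) (S := S) (w0 := w) (hw0 := hw0S) (hup := hup) hdense ⟨w, hw0S⟩).1 ?_
            refine (force_ext (V' := U') ?_).mpr (hUA _)
            intro u hu a ha
            by_cases hroot : u = (subframe F S w hw0S hup).root
            · subst hroot
              cases a with
              | inl x =>
                  refine (hvalw x).trans ?_
                  rw [hδx x]
                  have hxA : x ∈ VAl A := List.mem_dedup.2 (mem_fvars_of_occ ha)
                  exact ⟨fun h => h.2, fun h => ⟨hxA, h⟩⟩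
              | inr q =>
                  refine (chain_par (A := A)).trans ?_
                  refine Iff.trans ?_ (hpar.2 q)
                  exact chain_par.symm
            · have hu1 : u.1 ≠ w := fun h => hroot (Subtype.ext h)
              have hstrict : ¬ F.le u.1 w := fun h => hu1 (u.2.2 h)
              refine (need1 u.1 u.2.1 hstrict a).trans ?_
              exact hpar.1 u hroot a
          exact hdone (s+1) hs1N hC3
  refine (force_chain (A := A)).mp ?_
  rw [hVN]
  exact main _ w0 le_rfl

end GP
namespace GP
open Form
open scoped Classical
variable {var par : Type}

theorem nd_thX_adm (A : Form var par) (X : List var) (x : var) :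
    Nd [A] ((thX A X x).fiff (Form.v x)) := by
  unfold thX
  by_cases hx : x ∈ X
  · rw [if_pos hx]
    refine Nd.andI (Nd.impI ?_) (Nd.impI (Nd.impI ?_))
    · exact Nd.impE (Nd.ax (show A.imp (Form.v x) ∈ _ by simp))
        (Nd.ax (show A ∈ _ by simp))
    · exact Nd.ax (show Form.v x ∈ _ by simp)
  · rw [if_neg hx]
    refine Nd.andI (Nd.impI ?_) (Nd.impI ?_)
    · exact Nd.andE2 (Nd.ax (show A.and (Form.v x) ∈ _ by simp))
    · exact Nd.andI (Nd.ax (show A ∈ _ by simp)) (Nd.ax (show Form.v x ∈ _ by simp))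

theorem nd_csub_adm (A : Form var par) :
    ∀ (L : List (List var)) (x : var),
      Nd [A] ((csub A L (Form.v x)).fiff (Form.v x)) := by
  intro L
  induction L with
  | nil => intro x; exact nd_fiff_refl _
  | cons X L ih =>
      intro x
      have h1 : Nd [A]
          ((Form.subst (thX A X) (csub A L (Form.v x))).fiff (csub A L (Form.v x))) :=
        nd_repl (fun y => nd_thX_adm A X y) _
      exact nd_fiff_trans h1 (ih x)

theorem csub_as_subst (A : Form var par) :
    ∀ (L : List (List var)) (B : Form var par),
      csub A L B = Form.subst (fun x => csub A L (Form.v x)) B := by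
  intro L
  induction L with
  | nil => intro B; exact (subst_id B).symm
  | cons X L ih =>
      intro B
      show Form.subst (thX A X) (csub A L B) = _
      rw [ih B, subst_subst]
      rfl

theorem eext_to_eproj {A E : Form var par} (hE : E.varFree) (h : EExtendable A E) :
    EProjective A E := by
  classical
  refine ⟨fun x => csub A (XSl A) (Form.v x), ?_, ?_⟩
  · intro x
    exact prv_of_nd (Nd.impI (nd_csub_adm A (XSl A) x))
  · have hsubst : Form.subst (fun x => csub A (XSl A) (Form.v x)) A = csub A (XSl A) A :=
      (csub_as_subst A (XSl A) A).symm
    rw [hsubst]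
    have dir1 : Prv false ((csub A (XSl A) A).imp E) := by
      have h1 := prv_subst (fun x => csub A (XSl A) (Form.v x)) h.1
      have h2 : Form.subst (fun x => csub A (XSl A) (Form.v x)) (A.imp E)
          = (csub A (XSl A) A).imp E := by
        show (Form.subst _ A).imp (Form.subst _ E) = _
        rw [subst_varFree hE, hsubst]
      rwa [h2] at h1
    have dir2 : Prv false (E.imp (csub A (XSl A) A)) := by
      apply complete
      intro F V w
      intro u hu hEu
      have hup : ∀ v ∈ {v : F.W | F.le u v}, F.le u v := fun v hv => hv
      have hu0 : u ∈ {v : F.W | F.le u v} := F.refl u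
      have hdense : ∀ t ∈ {v : F.W | F.le u v}, ∀ v, F.le t v →
          ∃ v' ∈ {v : F.W | F.le u v}, F.le v v' ∧ F.le v' v := by
        intro t ht v hv
        exact ⟨v, F.trans _ _ _ ht hv, F.refl v, F.refl v⟩
      have hEall : ∀ t : (subframe F {v : F.W | F.le u v} u hu0 hup).W,
          force _ (subval V _ u hu0 hup) t E := by
        intro t
        exact (force_sub hdense t).2 (force_mono t.2 hEu)
      have hcore := core hE h (subframe F {v : F.W | F.le u v} u hu0 hup)
        (subval V _ u hu0 hup) hEall ⟨u, hu0⟩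
      exact (force_sub hdense ⟨u, hu0⟩).1 hcore
    have hnd : Nd ([] : List (Form var par))
        (((csub A (XSl A) A).imp E).and (E.imp (csub A (XSl A) A))) :=
      Nd.andI (nd_of_prv dir1) (nd_of_prv dir2)
    exact prv_of_nd hnd

end GP

/-- Intuitionistically, `E`-projectivity and `E`-extendability coincide for
variable-free `E`. -/
theorem eproj_iff_eextendable {var par : Type} (A E : Form var par) (hE : E.varFree) :
    EProjective A E ↔ EExtendable A E :=
  ⟨GP.eproj_to_eext, GP.eext_to_eproj hE⟩
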